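/- arXiv:1906.11643 — 3 statements merged into one kernel-verified Lean document; each statement's English description precedes it below -/
import Mathlib

section
/- The formal power series $I_0(q) = \sum_{d=0}^{\infty} \frac{(3d)!}{(d!)^3} q^d$ satisfies the differential equation $(1-27q)\left(q\frac{d}{dq}\right)^2 I_0 - 27q\left(q\frac{d}{dq}\right) I_0 - 6q\, I_0 = 0$. -/
open PowerSeries

/-- The logarithmic derivative operator `D = q d/dq` on formal power series. -/
noncomputable def logD (f : PowerSeries ℚ) : PowerSeries ℚ :=
  PowerSeries.X * PowerSeries.derivative ℚ f

/-- `I₀(q) = ∑_{d≥0} (3d)!/(d!)³ qᵈ`. -/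
noncomputable def I0 : PowerSeries ℚ :=
  PowerSeries.mk fun d => ((3 * d).factorial : ℚ) / ((d.factorial : ℚ)) ^ 3

lemma coeff_logD (f : PowerSeries ℚ) (n : ℕ) :
    PowerSeries.coeff n (logD f) = n * PowerSeries.coeff n f := by
  cases n with
  | zero => simp [logD]
  | succ n => rw [logD, coeff_succ_X_mul, coeff_derivative]; push_cast; ring

lemma I0_rec (n : ℕ) :
    ((n:ℚ)+1)^2 * (((3*(n+1)).factorial : ℚ) / (((n+1).factorial : ℚ))^3)
      = (27*(n:ℚ)^2+27*n+6) * (((3*n).factorial : ℚ) / ((n.factorial : ℚ))^3) := by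
  have h3 : (3*(n+1)).factorial = (3*n+3)*((3*n+2)*((3*n+1)*(3*n).factorial)) := by
    have : 3*(n+1) = (3*n+2)+1 := by ring
    rw [this, Nat.factorial_succ, Nat.factorial_succ, Nat.factorial_succ]
  have hn : ((n.factorial : ℚ)) ≠ 0 := Nat.cast_ne_zero.2 n.factorial_ne_zero
  have hn1 : (((n+1).factorial : ℚ)) ≠ 0 := Nat.cast_ne_zero.2 (n+1).factorial_ne_zero
  rw [h3, Nat.factorial_succ]
  push_cast
  field_simp
  ring

/-- `(1 - 27q)(q d/dq)² I₀ - 27 q (q d/dq) I₀ - 6 q I₀ = 0`. -/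
theorem I0_ODE :
    (1 - 27 * PowerSeries.X) * logD (logD I0)
      - 27 * PowerSeries.X * logD I0 - 6 * PowerSeries.X * I0 = 0 := by
  have h : (1 - 27 * PowerSeries.X) * logD (logD I0)
      - 27 * PowerSeries.X * logD I0 - 6 * PowerSeries.X * I0
      = logD (logD I0) - PowerSeries.X * (27 * logD (logD I0) + 27 * logD I0 + 6 * I0) := by
    ring
  have h27 : (27 : ℚ⟦X⟧) = PowerSeries.C 27 := (map_ofNat (PowerSeries.C (R := ℚ)) 27).symm
  have h6 : (6 : ℚ⟦X⟧) = PowerSeries.C 6 := (map_ofNat (PowerSeries.C (R := ℚ)) 6).symm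
  rw [h, h27, h6]
  ext n
  cases n with
  | zero => simp [logD]
  | succ n =>
    rw [map_sub, map_zero, coeff_succ_X_mul, coeff_logD, coeff_logD, map_add, map_add,
      coeff_C_mul, coeff_C_mul, coeff_C_mul, coeff_logD, coeff_logD]
    simp only [I0, coeff_mk]
    have := I0_rec n
    push_cast at this ⊢
    nlinarith [this]
end

section
/- For every $k \geq 1$, the quantity $Y_k = (L^{-1}q\frac{d}{dq})^{k-1} Y_1$ with $Y_1 = \frac13 L^2$, $L = (1-27q)^{-1/3}$, lies in the degree-$k$ part of the graded polynomial ring $\mathbb{Q}[Y_1, Y_2, Y_3]$, where $Y_i$ has degree $i$. -/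
open PowerSeries

lemma logD_add (f g : PowerSeries ℚ) : logD (f+g) = logD f + logD g := by
  simp [logD]; ring

lemma logD_mul (f g : PowerSeries ℚ) : logD (f*g) = logD f * g + f * logD g := by
  simp only [logD, Derivation.leibniz, smul_eq_mul]; ring

lemma logD_C (a : ℚ) : logD (PowerSeries.C (R := ℚ) a) = 0 := by simp [logD]

lemma logD_one : logD 1 = 0 := by simp [logD]

lemma logD_X : logD PowerSeries.X = PowerSeries.X := by simp [logD]

lemma logD_ofNat (n : ℕ) [n.AtLeastTwo] : logD (OfNat.ofNat n : PowerSeries ℚ) = 0 := by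
  rw [← map_ofNat (PowerSeries.C (R := ℚ)) n]; exact logD_C _

lemma logD_sub (f g : PowerSeries ℚ) : logD (f-g) = logD f - logD g := by
  simp [logD]; ring

lemma logD_pow (f : PowerSeries ℚ) (n : ℕ) :
    logD (f^(n+1)) = ((n:PowerSeries ℚ)+1) * f^n * logD f := by
  induction n with
  | zero => simp
  | succ n ih => rw [pow_succ, logD_mul, ih]; push_cast; ring

lemma logD_sq (f : PowerSeries ℚ) : logD (f^2) = 2 * f * logD f := by
  have := logD_pow f 1; norm_num at this; exact this

lemma logD_cube (f : PowerSeries ℚ) : logD (f^3) = 3 * f^2 * logD f := by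
  have := logD_pow f 2; norm_num at this; exact this

lemma logD_p4 (f : PowerSeries ℚ) : logD (f^4) = 4 * f^3 * logD f := by
  have := logD_pow f 3; norm_num at this; exact this

lemma logD_p6 (f : PowerSeries ℚ) : logD (f^6) = 6 * f^5 * logD f := by
  have := logD_pow f 5; norm_num at this; exact this

lemma delta_homog {w : Fin 3 → ℕ} {f : Fin 3 → MvPolynomial (Fin 3) ℚ}
    (hf : ∀ i, (f i).IsWeightedHomogeneous w (w i + 1)) {P : MvPolynomial (Fin 3) ℚ} {n : ℕ}
    (hP : P.IsWeightedHomogeneous w n) :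
    (MvPolynomial.mkDerivation ℚ f P).IsWeightedHomogeneous w (n+1) := by
  open MvPolynomial in
  have hsum : MvPolynomial.mkDerivation ℚ f P
      = ∑ d ∈ P.support, MvPolynomial.mkDerivation ℚ f (monomial d (coeff d P)) := by
    rw [← map_sum, ← MvPolynomial.as_sum]
  rw [hsum]
  apply MvPolynomial.IsWeightedHomogeneous.sum
  intro d hd
  rw [MvPolynomial.mkDerivation_monomial, ← MvPolynomial.mem_weightedHomogeneousSubmodule]
  apply Submodule.smul_mem
  rw [Finsupp.sum]
  apply Submodule.sum_mem
  intro i hi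
  rw [MvPolynomial.mem_weightedHomogeneousSubmodule, smul_eq_mul]
  have hdi : 1 ≤ d i := Nat.one_le_iff_ne_zero.mpr (Finsupp.mem_support_iff.mp hi)
  have hle : Finsupp.single i 1 ≤ d := by rwa [Finsupp.single_le_iff]
  have hsub : d - Finsupp.single i 1 + Finsupp.single i 1 = d := tsub_add_cancel_of_le hle
  have hwn : (Finsupp.weight w) (d - Finsupp.single i 1) + w i = n := by
    have h1 : (Finsupp.weight w) (Finsupp.single i 1) = w i := by
      simp [Finsupp.weight_apply, Finsupp.sum_single_index]
    rw [← h1, ← map_add, hsub]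
    exact hP (MvPolynomial.mem_support_iff.mp hd)
  have hm := (MvPolynomial.isWeightedHomogeneous_monomial w (d - Finsupp.single i 1)
      ((d i : ℚ)) rfl).mul (hf i)
  rwa [← add_assoc, hwn] at hm

/-- with `L = (1-27q)^{-1/3}`, `Y₁ = (1/3)L²` and
`Y_{k+1} = L⁻¹ q d/dq Y_k`, each `Y_k` (`k ≥ 1`) lies in the degree-`k` part of
the graded polynomial ring `ℚ[Y₁,Y₂,Y₃]` where `Y_i` has weight `i`: it is the
value at `(Y₁,Y₂,Y₃)` of a weighted-homogeneous polynomial of weighted degree `k`. -/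
theorem Y_finite_generation (L : PowerSeries ℚ)
    (hL : L ^ 3 * (1 - 27 * PowerSeries.X) = 1)
    (hL0 : PowerSeries.constantCoeff (R := ℚ) L = 1)
    (Y : ℕ → PowerSeries ℚ)
    (hY1 : Y 1 = PowerSeries.C (R := ℚ) (1/3) * L ^ 2)
    (hYrec : ∀ k ≥ 1, Y (k + 1) = L⁻¹ * logD (Y k)) :
    ∀ k ≥ 1, ∃ P : MvPolynomial (Fin 3) ℚ,
      MvPolynomial.IsWeightedHomogeneous (fun i : Fin 3 => (i : ℕ) + 1) P k ∧
      Y k = MvPolynomial.aeval ![Y 1, Y 2, Y 3] P := by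
  classical
  set w : Fin 3 → ℕ := fun i : Fin 3 => (i : ℕ) + 1 with hw
  set v : Fin 3 → PowerSeries ℚ := ![Y 1, Y 2, Y 3] with hv
  -- basic nonvanishing facts
  have hLne : L ≠ 0 := by
    intro h; rw [h] at hL0; simp at hL0
  have hXune : (1 - 27 * PowerSeries.X : PowerSeries ℚ) ≠ 0 := by
    intro h
    have := congrArg (PowerSeries.constantCoeff (R := ℚ)) h
    simp at this
  have h3ne : (3 : PowerSeries ℚ) ≠ 0 := by
    intro h
    have := congrArg (PowerSeries.constantCoeff (R := ℚ)) h
    simp [map_ofNat] at this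
  have h2ne : (2 : PowerSeries ℚ) ≠ 0 := by
    intro h
    have := congrArg (PowerSeries.constantCoeff (R := ℚ)) h
    simp [map_ofNat] at this
  have hLR : L * L⁻¹ = 1 := PowerSeries.mul_inv_cancel L (by rw [hL0]; norm_num)
  have h13 : PowerSeries.C (R := ℚ) (1/3) * 3 = 1 := by
    rw [← map_ofNat (PowerSeries.C (R := ℚ)) 3, ← map_mul]; norm_num
  have h152 : PowerSeries.C (R := ℚ) (15/2) * 2 = 15 := by
    rw [← map_ofNat (PowerSeries.C (R := ℚ)) 2, ← map_mul]; norm_num [map_ofNat]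
  -- logarithmic derivative of L
  have hlogDL : logD L = 9 * PowerSeries.X * L^4 := by
    have h0 : (3*L^2*logD L) * (1-27*PowerSeries.X) - 27*PowerSeries.X*L^3 = 0 := by
      have h := congrArg logD hL
      rw [logD_one, logD_mul, logD_cube, logD_sub, logD_one, logD_mul, logD_ofNat, logD_X] at h
      linear_combination h
    have hne : (3:PowerSeries ℚ)*L^2*(1-27*PowerSeries.X) ≠ 0 :=
      mul_ne_zero (mul_ne_zero h3ne (pow_ne_zero _ hLne)) hXune
    have key : (3*L^2*(1-27*PowerSeries.X)) * logD L
        = (3*L^2*(1-27*PowerSeries.X)) * (9*PowerSeries.X*L^4) := by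
      linear_combination h0 - 27*PowerSeries.X*L^3 * hL
    exact mul_left_cancel₀ hne key
  -- closed forms for Y 2, Y 3, Y 4
  have hstep : ∀ k ≥ 1, L * Y (k+1) = logD (Y k) := by
    intro k hk
    rw [hYrec k hk, ← mul_assoc, hLR, one_mul]
  have hY2 : Y 2 = 6*PowerSeries.X*L^4 := by
    apply mul_left_cancel₀ hLne
    rw [hstep 1 le_rfl, hY1, logD_mul, logD_C, logD_sq, hlogDL]
    linear_combination (6*PowerSeries.X*L^5) * h13
  have hY3 : Y 3 = 6*PowerSeries.X*L^3 + 216*PowerSeries.X^2*L^6 := by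
    apply mul_left_cancel₀ hLne
    rw [hstep 2 (by norm_num), hY2, logD_mul, logD_mul, logD_ofNat, logD_X, logD_p4, hlogDL]
    ring
  have hY4 : Y 4 = 6*PowerSeries.X*L^2 + 594*PowerSeries.X^2*L^5
      + 11664*PowerSeries.X^3*L^8 := by
    apply mul_left_cancel₀ hLne
    rw [hstep 3 (by norm_num), hY3, logD_add, logD_mul, logD_mul, logD_ofNat, logD_X,
      logD_cube, logD_mul, logD_mul, logD_ofNat, logD_sq, logD_X, logD_p6, hlogDL]
    ring
  -- the key quadratic expression for Y 4
  have hQ4val : Y 4 = 9*(Y 1)^2*(Y 2) + PowerSeries.C (R := ℚ) (15/2)*(Y 2)^2 := by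
    apply mul_right_cancel₀ (pow_ne_zero 2 hXune)
    rw [hY1, hY2, hY4]
    linear_combination (-314928*PowerSeries.X^4*L^5 + 18954*PowerSeries.X^3*L^5
        - 4374*PowerSeries.X^3*L^2 - 108*PowerSeries.X^2*L^5 + 324*PowerSeries.X^2*L^2
        - 6*PowerSeries.X*L^5 - 6*PowerSeries.X*L^2) * hL
      - (6*(3*PowerSeries.C (R := ℚ) (1/3)+1)*PowerSeries.X*L^8*(1-27*PowerSeries.X)^2) * h13
      - (18*PowerSeries.X^2*L^8*(1-27*PowerSeries.X)^2) * h152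
  -- the polynomial representing Y 4
  set Q4 : MvPolynomial (Fin 3) ℚ :=
    MvPolynomial.C (9:ℚ) * MvPolynomial.X 0 ^ 2 * MvPolynomial.X 1
      + MvPolynomial.C (15/2 : ℚ) * MvPolynomial.X 1 ^ 2 with hQ4
  have hX0 : (MvPolynomial.X 0 : MvPolynomial (Fin 3) ℚ).IsWeightedHomogeneous w 1 := by
    have := MvPolynomial.isWeightedHomogeneous_X ℚ w 0
    simpa [hw] using this
  have hX1 : (MvPolynomial.X 1 : MvPolynomial (Fin 3) ℚ).IsWeightedHomogeneous w 2 := by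
    have := MvPolynomial.isWeightedHomogeneous_X ℚ w 1
    simpa [hw] using this
  have hX2 : (MvPolynomial.X 2 : MvPolynomial (Fin 3) ℚ).IsWeightedHomogeneous w 3 := by
    have := MvPolynomial.isWeightedHomogeneous_X ℚ w 2
    simpa [hw] using this
  have hQ4hom : Q4.IsWeightedHomogeneous w 4 := by
    have hx0sq : ((MvPolynomial.X 0 : MvPolynomial (Fin 3) ℚ)^2).IsWeightedHomogeneous w 2 := by
      rw [sq]; exact hX0.mul hX0
    have hx1sq : ((MvPolynomial.X 1 : MvPolynomial (Fin 3) ℚ)^2).IsWeightedHomogeneous w 4 := by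
      rw [sq]; exact hX1.mul hX1
    have h1 := ((MvPolynomial.isWeightedHomogeneous_C w (9:ℚ)).mul hx0sq).mul hX1
    have h2 := (MvPolynomial.isWeightedHomogeneous_C w (15/2:ℚ)).mul hx1sq
    exact h1.add h2
  -- the derivation data
  set f : Fin 3 → MvPolynomial (Fin 3) ℚ := ![MvPolynomial.X 1, MvPolynomial.X 2, Q4] with hf
  have hfhom : ∀ i, (f i).IsWeightedHomogeneous w (w i + 1) := by
    intro i
    fin_cases i
    · simpa [hf, hw] using hX1
    · simpa [hf, hw] using hX2
    · simpa [hf, hw] using hQ4hom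
  -- evaluation is compatible with the derivation
  have hv0 : v 0 = Y 1 := rfl
  have hv1 : v 1 = Y 2 := rfl
  have hv2 : v 2 = Y 3 := rfl
  have hfi : ∀ i, MvPolynomial.aeval v (f i) = L⁻¹ * logD (v i) := by
    intro i
    fin_cases i
    · show MvPolynomial.aeval v (MvPolynomial.X 1) = L⁻¹ * logD (v 0)
      rw [MvPolynomial.aeval_X, hv1, hv0, ← hYrec 1 le_rfl]
    · show MvPolynomial.aeval v (MvPolynomial.X 2) = L⁻¹ * logD (v 1)
      rw [MvPolynomial.aeval_X, hv2, hv1, ← hYrec 2 (by norm_num)]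
    · show MvPolynomial.aeval v Q4 = L⁻¹ * logD (v 2)
      rw [hv2, ← hYrec 3 (by norm_num)]
      rw [hQ4]
      simp only [map_add, map_mul, map_pow, MvPolynomial.aeval_X, MvPolynomial.aeval_C,
        ← PowerSeries.C_eq_algebraMap, hv0, hv1]
      rw [show Y (3+1) = Y 4 from rfl, hQ4val, ← map_ofNat (PowerSeries.C (R := ℚ)) 9]
  have main : ∀ P : MvPolynomial (Fin 3) ℚ,
      MvPolynomial.aeval v (MvPolynomial.mkDerivation ℚ f P)
        = L⁻¹ * logD (MvPolynomial.aeval v P) := by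
    intro P
    induction P using MvPolynomial.induction_on with
    | C a =>
      rw [show (MvPolynomial.C a : MvPolynomial (Fin 3) ℚ) = algebraMap ℚ _ a from rfl]
      rw [Derivation.map_algebraMap]
      simp [← PowerSeries.C_eq_algebraMap, logD_C]
    | add p q hp hq =>
      rw [map_add, map_add, map_add, logD_add, hp, hq]; ring
    | mul_X p i hp =>
      rw [Derivation.leibniz]
      simp only [smul_eq_mul, MvPolynomial.mkDerivation_X, map_add, map_mul]
      rw [hp, logD_mul, MvPolynomial.aeval_X, hfi i]
      ring
  -- the induction
  intro k hk
  induction k, hk using Nat.le_induction with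
  | base =>
    refine ⟨MvPolynomial.X 0, ?_, ?_⟩
    · simpa [hw] using MvPolynomial.isWeightedHomogeneous_X ℚ w 0
    · rw [MvPolynomial.aeval_X]; exact hv0.symm
  | succ k hk ih =>
    obtain ⟨P, hhom, heq⟩ := ih
    refine ⟨MvPolynomial.mkDerivation ℚ f P, delta_homog hfhom hhom, ?_⟩
    rw [main P, ← heq, ← hYrec k hk]
end

section
/- Borwein's cubic identity: the cubic theta functions satisfy $a(Q)^3 = b(Q)^3 + c(Q)^3$, where $c(Q) = \sum_{n,m\in\mathbb{Z}} Q^{(n+\frac13)^2 + (n+\frac13)(m+\frac13) + (m+\frac13)^2}$; equivalently, $1 - \frac{b(Q)^3}{a(Q)^3} = \frac{c(Q)^3}{a(Q)^3}$, so $27q := 1 - b^3/a^3$ defines a $Q$-series with positive coefficients starting $27Q + O(Q^2)$. -/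
open Complex

/-- The cubic AGM theta function `a(Q) = ∑_{n,m∈ℤ} Q^{n²+nm+m²}`. -/
noncomputable def thetaA (Q : ℂ) : ℂ :=
  ∑' p : ℤ × ℤ, Q ^ (p.1 ^ 2 + p.1 * p.2 + p.2 ^ 2).toNat

/-- The cubic AGM theta function `b(Q) = ∑_{n,m∈ℤ} ω^{n-m} Q^{n²+nm+m²}`,
`ω = e^{2πi/3}`. -/
noncomputable def thetaB (Q : ℂ) : ℂ :=
  ∑' p : ℤ × ℤ,
    Complex.exp (2 * Real.pi * Complex.I / 3) ^ (p.1 - p.2) *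
      Q ^ (p.1 ^ 2 + p.1 * p.2 + p.2 ^ 2).toNat

/-- The cubic theta function
`c(Q) = ∑_{n,m∈ℤ} Q^{(n+1/3)² + (n+1/3)(m+1/3) + (m+1/3)²}` (complex powers). -/
noncomputable def thetaC (Q : ℂ) : ℂ :=
  ∑' p : ℤ × ℤ,
    Q ^ ((((p.1 : ℂ) + 1/3) ^ 2 + ((p.1 : ℂ) + 1/3) * ((p.2 : ℂ) + 1/3)
          + ((p.2 : ℂ) + 1/3) ^ 2 : ℂ))

namespace BorweinAux


abbrev P2 : Type := ℤ × ℤ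
abbrev P6 : Type := P2 × P2 × P2

def E2 (p : P2) : ℤ := p.1 ^ 2 + p.1 * p.2 + p.2 ^ 2
def G2 (p : P2) : ℤ := p.1 ^ 2 + p.1 * p.2 + p.2 ^ 2 + p.1 + p.2
def eZ (z : P6) : ℤ := E2 z.1 + E2 z.2.1 + E2 z.2.2
def KZ (z : P6) : ℤ := (z.1.1 - z.1.2) + (z.2.1.1 - z.2.1.2) + (z.2.2.1 - z.2.2.2)
def fW (w : P6) : ℤ := G2 w.1 + G2 w.2.1 + G2 w.2.2 + 1

lemma E2_nonneg (p : P2) : 0 ≤ E2 p := by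
  have h := sq_nonneg (p.1 + p.2); have h1 := sq_nonneg p.1; have h2 := sq_nonneg p.2
  unfold E2; nlinarith

lemma G2_nonneg (p : P2) : 0 ≤ G2 p := by
  have h := sq_nonneg (3 * p.1 + 3 * p.2 + 2)
  have h1 := sq_nonneg (3 * p.1 + 1); have h2 := sq_nonneg (3 * p.2 + 1)
  have : 0 ≤ 18 * G2 p + 6 := by unfold G2; nlinarith
  omega

lemma fW_nonneg (w : P6) : 0 ≤ fW w := by
  have := G2_nonneg w.1; have := G2_nonneg w.2.1; have := G2_nonneg w.2.2
  unfold fW; omega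

def Xi (c : ℤ) (p : P6) : P6 :=
  (p.1, p.2.1,
    (c + p.2.2.1 + (p.1.2 - p.1.1) + (p.2.1.2 - p.2.1.1) + 3 * p.2.2.2, p.2.2.1))

lemma KZ_Xi (c : ℤ) (p : P6) : KZ (Xi c p) = c + 3 * p.2.2.2 := by
  unfold KZ Xi; dsimp; ring

lemma eZ_Xi_neg (p : P6) :
    eZ (Xi 2 ((-p.1.1, -p.1.2), (-p.2.1.1, -p.2.1.2), (-p.2.2.1, -1 - p.2.2.2))) =
      eZ (Xi 1 p) := by
  unfold eZ Xi E2; dsimp; ring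

def Th : ℕ → P6 → P6
  | 0, p =>
    ((p.2.2.2, p.1.2 + p.2.1.2 + p.2.2.1 + p.2.2.2),
     (-p.2.1.1 + p.2.2.1 + p.2.2.2,
       p.1.1 + p.2.1.1 - p.2.1.2 - p.2.2.1 - 2 * p.2.2.2 - 1),
     (p.1.1 - p.1.2 + p.2.1.1 - p.2.2.1 - 2 * p.2.2.2 - 1,
       p.1.2 - p.2.1.1 + p.2.2.2))
  | 1, p =>
    ((p.1.2 + p.2.1.2 + p.2.2.1 + p.2.2.2,
       -p.1.2 - p.2.1.2 - p.2.2.1 - 2 * p.2.2.2 - 1),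
     (-p.2.1.1 + p.2.2.1 + p.2.2.2,
       p.1.1 + p.2.1.1 - p.2.1.2 - p.2.2.1 - 2 * p.2.2.2 - 1),
     (p.1.1 - p.1.2 + p.2.1.1 - p.2.2.1 - 2 * p.2.2.2 - 1,
       p.1.2 - p.2.1.1 + p.2.2.2))
  | _ + 2, p =>
    ((-p.1.2 - p.2.1.2 - p.2.2.1 - 2 * p.2.2.2 - 1, p.2.2.2),
     (-p.2.1.1 + p.2.2.1 + p.2.2.2,
       p.1.1 + p.2.1.1 - p.2.1.2 - p.2.2.1 - 2 * p.2.2.2 - 1),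
     (p.1.1 - p.1.2 + p.2.1.1 - p.2.2.1 - 2 * p.2.2.2 - 1,
       p.1.2 - p.2.1.1 + p.2.2.2))

lemma fW_Th (j : ℕ) (p : P6) : fW (Th j p) = eZ (Xi 1 p) := by
  rcases j with _ | _ | j <;>
    · unfold fW Th eZ Xi G2 E2
      ring

/-- sum of a-coords minus b-coords on the `c`-side -/
def SW (w : P6) : ℤ := w.1.1 + w.2.1.1 + w.2.2.1 - w.1.2 - w.2.1.2 - w.2.2.2

def Aw (w : P6) : ℤ :=
  if SW w % 3 = 0 then w.1.1 else if SW w % 3 = 1 then -w.1.1 - w.1.2 - 1 else w.1.2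

def Bw (w : P6) : ℤ :=
  if SW w % 3 = 0 then w.1.2 else if SW w % 3 = 1 then w.1.1 else -w.1.1 - w.1.2 - 1

def N2 (w : P6) : ℤ :=
  (Bw w + w.2.1.2 - w.2.2.1 - w.2.1.1 - 2 * w.2.2.2 + 2 * Aw w) / 3

def ThInv (w : P6) : Fin 3 × P6 :=
  (⟨(SW w % 3).toNat, by omega⟩,
   ((w.2.1.2 + 2 * Aw w + 1 - N2 w + (Bw w + Aw w - w.2.1.1 - w.2.2.2 - 2 * N2 w) +
       (w.2.1.1 - Aw w + N2 w),
     w.2.2.2 - Aw w + N2 w),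
    (N2 w, Bw w + Aw w - w.2.1.1 - w.2.2.2 - 2 * N2 w),
    (w.2.1.1 - Aw w + N2 w, Aw w)))

def eqTh : (Fin 3 × P6) ≃ P6 where
  toFun x := Th x.1.val x.2
  invFun := ThInv
  left_inv := by
    rintro ⟨⟨j, hj⟩, ⟨n1, m1⟩, ⟨n2, m2⟩, ⟨m3, k⟩⟩
    interval_cases j <;>
      · simp only [Th, ThInv, Aw, Bw, N2, SW, reduceIte, Prod.mk.injEq, Fin.mk.injEq]
        omega
  right_inv := by
    rintro ⟨⟨a1, b1⟩, ⟨a2, b2⟩, ⟨a3, b3⟩⟩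
    have hc : (a1 + a2 + a3 - b1 - b2 - b3) % 3 = 0 ∨
        (a1 + a2 + a3 - b1 - b2 - b3) % 3 = 1 ∨
        (a1 + a2 + a3 - b1 - b2 - b3) % 3 = 2 := by omega
    rcases hc with h | h | h <;>
      · simp only [Th, ThInv, Aw, Bw, N2, SW, Prod.mk.injEq]
        simp only [h]
        norm_num [Prod.mk.injEq, show Int.toNat 2 = 2 from rfl]
        omega

def XiInv (z : P6) : Fin 3 × P6 :=
  (⟨(KZ z % 3).toNat, by omega⟩,
   (z.1, z.2.1,
     (z.2.2.2,
       (z.2.2.1 - KZ z % 3 - z.2.2.2 - (z.1.2 - z.1.1) - (z.2.1.2 - z.2.1.1)) / 3)))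

def eqXi : (Fin 3 × P6) ≃ P6 where
  toFun x := Xi x.1.val x.2
  invFun := XiInv
  left_inv := by
    rintro ⟨⟨j, hj⟩, ⟨n1, m1⟩, ⟨n2, m2⟩, ⟨m3, k⟩⟩
    simp only [Xi, XiInv, KZ, Prod.mk.injEq, Fin.mk.injEq]
    norm_num
    omega
  right_inv := by
    rintro ⟨⟨n1, m1⟩, ⟨n2, m2⟩, ⟨n3, m3⟩⟩
    simp only [Xi, XiInv, KZ, Prod.mk.injEq]
    norm_num
    omega

def negEquiv : P6 ≃ P6 where
  toFun p := ((-p.1.1, -p.1.2), (-p.2.1.1, -p.2.1.2), (-p.2.2.1, -1 - p.2.2.2))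
  invFun p := ((-p.1.1, -p.1.2), (-p.2.1.1, -p.2.1.2), (-p.2.2.1, -1 - p.2.2.2))
  left_inv := by rintro ⟨⟨a, b⟩, ⟨c, d⟩, ⟨e, f⟩⟩; simp
  right_inv := by rintro ⟨⟨a, b⟩, ⟨c, d⟩, ⟨e, f⟩⟩; simp


/-! ### the root of unity -/

noncomputable def om : ℂ := Complex.exp (2 * Real.pi * Complex.I / 3)

lemma om_ne_zero : om ≠ 0 := Complex.exp_ne_zero _

lemma om_pow_three : om ^ (3 : ℕ) = 1 := by
  rw [om, ← Complex.exp_nat_mul]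
  rw [show ((3 : ℕ) : ℂ) * (2 * Real.pi * Complex.I / 3) = 2 * Real.pi * Complex.I by
    push_cast; ring]
  exact Complex.exp_two_pi_mul_I

lemma om_ne_one : om ≠ 1 := by
  intro h
  rw [om, Complex.exp_eq_one_iff] at h
  obtain ⟨n, hn⟩ := h
  have hπ : (Real.pi : ℂ) ≠ 0 := by exact_mod_cast Real.pi_ne_zero
  have hI := Complex.I_ne_zero
  have hne : (2 * (Real.pi : ℂ) * Complex.I) ≠ 0 :=
    mul_ne_zero (mul_ne_zero two_ne_zero hπ) hI
  have h2 : (2 * (Real.pi : ℂ) * Complex.I) * (1/3 : ℂ)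
      = (2 * (Real.pi : ℂ) * Complex.I) * (n : ℂ) := by linear_combination hn
  have h3 : (1/3 : ℂ) = (n : ℂ) := mul_left_cancel₀ hne h2
  have h4 : (3 * n : ℂ) = 1 := by rw [← h3]; norm_num
  have : (3 * n : ℤ) = 1 := by exact_mod_cast h4
  omega

lemma om_sum : 1 + om + om ^ 2 = 0 := by
  have h := om_pow_three
  have h2 : (om - 1) * (1 + om + om ^ 2) = 0 := by linear_combination h
  rcases mul_eq_zero.1 h2 with h3 | h3
  · exact absurd (by linear_combination h3) om_ne_one
  · exact h3

lemma om_zpow_shift (c k : ℤ) : om ^ (c + 3 * k) = om ^ c := by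
  rw [zpow_add₀ om_ne_zero, zpow_mul, show ((3 : ℤ) = (3 : ℕ)) from rfl, zpow_natCast,
    om_pow_three, one_zpow, mul_one]

lemma om_norm : ‖om‖ = 1 := by
  rw [om, show (2 * (Real.pi : ℂ) * Complex.I / 3) = ((2 * Real.pi / 3 : ℝ) : ℂ) * Complex.I
    by push_cast; ring]
  rw [Complex.norm_exp_ofReal_mul_I]

lemma om_zpow_norm (k : ℤ) : ‖om ^ k‖ = 1 := by
  rw [norm_zpow, om_norm, one_zpow]

/-! ### summability -/

lemma summable_int_geom {r : ℝ} (h0 : 0 ≤ r) (h1 : r < 1) :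
    Summable fun n : ℤ => r ^ n.natAbs := by
  apply Summable.of_nat_of_neg
  · simpa using summable_geometric_of_lt_one h0 h1
  · simpa using summable_geometric_of_lt_one h0 h1

lemma summable_pair {r : ℝ} (h0 : 0 ≤ r) (h1 : r < 1) :
    Summable fun p : P2 => r ^ (p.1.natAbs + p.2.natAbs) := by
  have h := (summable_int_geom h0 h1).mul_of_nonneg (summable_int_geom h0 h1)
    (fun n => pow_nonneg h0 _) (fun n => pow_nonneg h0 _)
  exact h.congr fun p => (pow_add r _ _).symm

lemma E2_natAbs_bound (p : P2) : p.1.natAbs + p.2.natAbs ≤ (E2 p).toNat + 2 := by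
  have h1 : ((p.1.natAbs : ℤ)) ^ 2 = p.1 ^ 2 := Int.natAbs_sq p.1
  have h2 : ((p.2.natAbs : ℤ)) ^ 2 = p.2 ^ 2 := Int.natAbs_sq p.2
  have key : (p.1.natAbs : ℤ) + p.2.natAbs ≤ E2 p + 2 := by
    have := sq_nonneg (p.1 + p.2)
    have := sq_nonneg ((p.1.natAbs : ℤ) - 1)
    have := sq_nonneg ((p.2.natAbs : ℤ) - 1)
    unfold E2; nlinarith
  have := E2_nonneg p
  omega

lemma G2_natAbs_bound (p : P2) : (p.1.natAbs : ℤ) + p.2.natAbs ≤ G2 p + 5 := by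
  have h1 : ((p.1.natAbs : ℤ)) ^ 2 = p.1 ^ 2 := Int.natAbs_sq p.1
  have h2 : ((p.2.natAbs : ℤ)) ^ 2 = p.2 ^ 2 := Int.natAbs_sq p.2
  have ha1 : -(p.1.natAbs : ℤ) ≤ p.1 := by omega
  have ha2 : -(p.2.natAbs : ℤ) ≤ p.2 := by omega
  have := sq_nonneg (p.1 + p.2)
  have := sq_nonneg ((p.1.natAbs : ℤ) - 2)
  have := sq_nonneg ((p.2.natAbs : ℤ) - 2)
  unfold G2; nlinarith

section QFixed

variable {Q : ℂ}

noncomputable def fA (Q : ℂ) (p : P2) : ℂ := Q ^ (E2 p).toNat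

noncomputable def fB (Q : ℂ) (p : P2) : ℂ := om ^ (p.1 - p.2) * Q ^ (E2 p).toNat

noncomputable def fC (Q : ℂ) (p : P2) : ℂ :=
  Q ^ ((((p.1 : ℂ) + 1/3) ^ 2 + ((p.1 : ℂ) + 1/3) * ((p.2 : ℂ) + 1/3)
          + ((p.2 : ℂ) + 1/3) ^ 2 : ℂ))

lemma thetaA_eq (Q : ℂ) : thetaA Q = ∑' p : P2, fA Q p := rfl

lemma thetaB_eq (Q : ℂ) : thetaB Q = ∑' p : P2, fB Q p := rfl

lemma thetaC_eq (Q : ℂ) : thetaC Q = ∑' p : P2, fC Q p := rfl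

lemma cexp_eq (p : P2) :
    (((p.1 : ℂ) + 1/3) ^ 2 + ((p.1 : ℂ) + 1/3) * ((p.2 : ℂ) + 1/3)
        + ((p.2 : ℂ) + 1/3) ^ 2 : ℂ) = ((G2 p : ℤ) : ℂ) + 1/3 := by
  unfold G2; push_cast; ring

lemma summable_fA_norm (h1 : ‖Q‖ < 1) (hQ : Q ≠ 0) :
    Summable fun p : P2 => ‖fA Q p‖ := by
  have hr0 : (0 : ℝ) < ‖Q‖ := norm_pos_iff.2 hQ
  apply Summable.of_nonneg_of_le (fun p => norm_nonneg _)
    (f := fun p : P2 => (‖Q‖⁻¹ ^ 2) * ‖Q‖ ^ (p.1.natAbs + p.2.natAbs))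
  · intro p
    rw [fA, norm_pow]
    rw [inv_pow, inv_mul_eq_div, le_div_iff₀ (by positivity)]
    calc ‖Q‖ ^ (E2 p).toNat * ‖Q‖ ^ 2 = ‖Q‖ ^ ((E2 p).toNat + 2) := (pow_add _ _ _).symm
      _ ≤ ‖Q‖ ^ (p.1.natAbs + p.2.natAbs) :=
          pow_le_pow_of_le_one hr0.le h1.le (E2_natAbs_bound p)
  · exact (summable_pair hr0.le h1).mul_left _

lemma summable_fB_norm (h1 : ‖Q‖ < 1) (hQ : Q ≠ 0) :
    Summable fun p : P2 => ‖fB Q p‖ := by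
  have h := summable_fA_norm h1 hQ
  apply h.congr
  intro p
  rw [fB, fA, norm_mul, om_zpow_norm, one_mul]

lemma fC_norm (hQ : Q ≠ 0) (p : P2) : ‖fC Q p‖ = ‖Q‖ ^ ((G2 p : ℝ) + 1/3) := by
  rw [fC, cexp_eq]
  rw [show ((G2 p : ℤ) : ℂ) + 1/3 = (((G2 p : ℝ) + 1/3 : ℝ) : ℂ) by push_cast; ring]
  rw [Complex.norm_cpow_of_ne_zero hQ]
  simp [Complex.ofReal_re, Complex.ofReal_im]

lemma summable_fC_norm (h1 : ‖Q‖ < 1) (hQ : Q ≠ 0) :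
    Summable fun p : P2 => ‖fC Q p‖ := by
  have hr0 : (0 : ℝ) < ‖Q‖ := norm_pos_iff.2 hQ
  apply Summable.of_nonneg_of_le (fun p => norm_nonneg _)
    (f := fun p : P2 => (‖Q‖⁻¹ ^ 5) * ‖Q‖ ^ (p.1.natAbs + p.2.natAbs))
  · intro p
    rw [fC_norm hQ]
    have hexp : ((p.1.natAbs + p.2.natAbs : ℕ) : ℝ) - 5 ≤ (G2 p : ℝ) + 1/3 := by
      have hb := G2_natAbs_bound p
      have hz : (((p.1.natAbs + p.2.natAbs : ℕ) : ℤ)) ≤ G2 p + 5 := by omega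
      have hr := Int.cast_mono (R := ℝ) hz
      push_cast [Nat.cast_natAbs] at hr ⊢
      linarith
    calc ‖Q‖ ^ ((G2 p : ℝ) + 1/3)
        ≤ ‖Q‖ ^ (((p.1.natAbs + p.2.natAbs : ℕ) : ℝ) - 5) :=
          Real.rpow_le_rpow_of_exponent_ge hr0 h1.le hexp
      _ = (‖Q‖⁻¹ ^ 5) * ‖Q‖ ^ (p.1.natAbs + p.2.natAbs) := by
          rw [Real.rpow_sub hr0, Real.rpow_natCast,
            show (5 : ℝ) = ((5 : ℕ) : ℝ) by norm_num, Real.rpow_natCast,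
            div_eq_inv_mul, inv_pow]
  · exact (summable_pair hr0.le h1).mul_left _

/-! ### the triple sums -/

noncomputable def FA3 (Q : ℂ) (z : P6) : ℂ := Q ^ (eZ z).toNat

noncomputable def FB3 (Q : ℂ) (z : P6) : ℂ := om ^ KZ z * Q ^ (eZ z).toNat

noncomputable def FC3 (Q : ℂ) (w : P6) : ℂ := Q ^ (fW w).toNat

lemma cube_expand {f : P2 → ℂ} (hf : Summable fun p => ‖f p‖) :
    (∑' p : P2, f p) ^ 3 = ∑' z : P6, f z.1 * (f z.2.1 * f z.2.2) := by
  have h2 : ((∑' p : P2, f p) * ∑' p : P2, f p) = ∑' z : P2 × P2, f z.1 * f z.2 :=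
    tsum_mul_tsum_of_summable_norm hf hf
  have h3 : ((∑' p : P2, f p) * ∑' z : P2 × P2, f z.1 * f z.2)
      = ∑' z : P2 × (P2 × P2), f z.1 * (f z.2.1 * f z.2.2) :=
    tsum_mul_tsum_of_summable_norm hf (hf.mul_norm hf)
  calc (∑' p : P2, f p) ^ 3 = (∑' p : P2, f p) * ((∑' p : P2, f p) * ∑' p : P2, f p) := by ring
    _ = ∑' z : P6, f z.1 * (f z.2.1 * f z.2.2) := by rw [h2, h3]

lemma FA3_eq (Q : ℂ) (z : P6) : fA Q z.1 * (fA Q z.2.1 * fA Q z.2.2) = FA3 Q z := by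
  rw [fA, fA, fA, FA3, ← pow_add, ← pow_add]
  congr 1
  have := E2_nonneg z.1; have := E2_nonneg z.2.1; have := E2_nonneg z.2.2
  unfold eZ; omega

lemma FB3_eq (Q : ℂ) (z : P6) : fB Q z.1 * (fB Q z.2.1 * fB Q z.2.2) = FB3 Q z := by
  rw [fB, fB, fB, FB3]
  have h : om ^ KZ z = om ^ (z.1.1 - z.1.2) *
      (om ^ (z.2.1.1 - z.2.1.2) * om ^ (z.2.2.1 - z.2.2.2)) := by
    rw [← zpow_add₀ om_ne_zero, ← zpow_add₀ om_ne_zero]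
    congr 1
    unfold KZ; ring
  have hq : Q ^ (E2 z.1).toNat * (Q ^ (E2 z.2.1).toNat * Q ^ (E2 z.2.2).toNat)
      = Q ^ (eZ z).toNat := by
    rw [← pow_add, ← pow_add]
    congr 1
    have := E2_nonneg z.1; have := E2_nonneg z.2.1; have := E2_nonneg z.2.2
    unfold eZ; omega
  rw [h, ← hq]
  ring

lemma FC3_eq (hQ : Q ≠ 0) (w : P6) : fC Q w.1 * (fC Q w.2.1 * fC Q w.2.2) = FC3 Q w := by
  rw [fC, fC, fC, cexp_eq, cexp_eq, cexp_eq, ← Complex.cpow_add _ _ hQ,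
    ← Complex.cpow_add _ _ hQ, FC3]
  have hcast : (((G2 w.2.1 : ℤ) : ℂ) + 1/3 + (((G2 w.2.2 : ℤ) : ℂ) + 1/3))
      = ((G2 w.2.1 : ℤ) : ℂ) + ((G2 w.2.2 : ℤ) : ℂ) + 2/3 := by ring
  have hsum : (((G2 w.1 : ℤ) : ℂ) + 1/3) + ((((G2 w.2.1 : ℤ) : ℂ) + 1/3) + (((G2 w.2.2 : ℤ) : ℂ) + 1/3))
      = (((fW w).toNat : ℕ) : ℂ) := by
    have h0 : (((fW w).toNat : ℕ) : ℤ) = fW w := Int.toNat_of_nonneg (fW_nonneg w)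
    have h1 : (((fW w).toNat : ℕ) : ℂ) = ((fW w : ℤ) : ℂ) := by exact_mod_cast congrArg (fun n : ℤ => (n : ℂ)) h0
    rw [h1]; unfold fW; push_cast; ring
  rw [hsum, Complex.cpow_natCast]

lemma tsum_FA3 (h1 : ‖Q‖ < 1) (hQ : Q ≠ 0) : thetaA Q ^ 3 = ∑' z : P6, FA3 Q z := by
  rw [thetaA_eq, cube_expand (summable_fA_norm h1 hQ)]
  exact tsum_congr fun z => FA3_eq Q z

lemma tsum_FB3 (h1 : ‖Q‖ < 1) (hQ : Q ≠ 0) : thetaB Q ^ 3 = ∑' z : P6, FB3 Q z := by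
  rw [thetaB_eq, cube_expand (summable_fB_norm h1 hQ)]
  exact tsum_congr fun z => FB3_eq Q z

lemma tsum_FC3 (h1 : ‖Q‖ < 1) (hQ : Q ≠ 0) : thetaC Q ^ 3 = ∑' w : P6, FC3 Q w := by
  rw [thetaC_eq, cube_expand (summable_fC_norm h1 hQ)]
  exact tsum_congr fun w => FC3_eq hQ w

lemma summable_FA3 (h1 : ‖Q‖ < 1) (hQ : Q ≠ 0) : Summable (FA3 Q) := by
  have hf := summable_fA_norm h1 hQ
  have h := summable_mul_of_summable_norm (f := fA Q) (g := fun z : P2 × P2 => fA Q z.1 * fA Q z.2) hf (hf.mul_norm hf)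
  exact h.congr (fun z => FA3_eq Q z)

lemma summable_FB3 (h1 : ‖Q‖ < 1) (hQ : Q ≠ 0) : Summable (FB3 Q) := by
  have hf := summable_fB_norm h1 hQ
  have h := summable_mul_of_summable_norm (f := fB Q) (g := fun z : P2 × P2 => fB Q z.1 * fB Q z.2) hf (hf.mul_norm hf)
  exact h.congr (fun z => FB3_eq Q z)

lemma summable_FC3 (h1 : ‖Q‖ < 1) (hQ : Q ≠ 0) : Summable (FC3 Q) := by
  have hf := summable_fC_norm h1 hQ
  have h := summable_mul_of_summable_norm (f := fC Q) (g := fun z : P2 × P2 => fC Q z.1 * fC Q z.2) hf (hf.mul_norm hf)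
  exact h.congr (fun w => FC3_eq hQ w)

/-! ### the two dissections -/

noncomputable def Sc (Q : ℂ) (c : ℤ) : ℂ := ∑' p : P6, Q ^ (eZ (Xi c p)).toNat

lemma Xi_injective (c : ℤ) : Function.Injective (Xi c) := by
  rintro ⟨⟨n1, m1⟩, ⟨n2, m2⟩, ⟨m3, k⟩⟩ ⟨⟨n1', m1'⟩, ⟨n2', m2'⟩, ⟨m3', k'⟩⟩ h
  simp only [Xi, Prod.mk.injEq] at h
  obtain ⟨⟨h1, h2⟩, ⟨h3, h4⟩, h5, h6⟩ := h
  simp only [Prod.mk.injEq]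
  omega

lemma summable_Sc (h1 : ‖Q‖ < 1) (hQ : Q ≠ 0) (c : ℤ) :
    Summable fun p : P6 => Q ^ (eZ (Xi c p)).toNat := by
  exact (summable_FA3 h1 hQ).comp_injective (Xi_injective c)

lemma Sc_two_eq_one (Q : ℂ) : Sc Q 2 = Sc Q 1 := by
  rw [Sc, Sc, ← negEquiv.tsum_eq (fun p : P6 => Q ^ (eZ (Xi 2 p)).toNat)]
  exact tsum_congr fun p => by
    rw [show negEquiv p = ((-p.1.1, -p.1.2), (-p.2.1.1, -p.2.1.2), (-p.2.2.1, -1 - p.2.2.2))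
      from rfl, eZ_Xi_neg]

lemma ab_side (h1 : ‖Q‖ < 1) (hQ : Q ≠ 0) :
    thetaA Q ^ 3 - thetaB Q ^ 3 = 3 * Sc Q 1 := by
  have hA := summable_FA3 h1 hQ
  have hB := summable_FB3 h1 hQ
  rw [tsum_FA3 h1 hQ, tsum_FB3 h1 hQ, ← hA.tsum_sub hB]
  have step1 : ∑' z : P6, (FA3 Q z - FB3 Q z)
      = ∑' x : Fin 3 × P6, (FA3 Q (eqXi x) - FB3 Q (eqXi x)) :=
    (eqXi.tsum_eq (fun z => FA3 Q z - FB3 Q z)).symm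
  have hpoint : ∀ x : Fin 3 × P6, FA3 Q (eqXi x) - FB3 Q (eqXi x)
      = (1 - om ^ ((x.1 : ℕ) : ℤ)) * Q ^ (eZ (Xi ((x.1 : ℕ) : ℤ) x.2)).toNat := by
    rintro ⟨j, p⟩
    show FA3 Q (Xi ((j : ℕ) : ℤ) p) - FB3 Q (Xi ((j : ℕ) : ℤ) p) = _
    rw [FA3, FB3, KZ_Xi, om_zpow_shift]
    ring
  rw [step1, tsum_congr hpoint]
  have hsum : Summable fun x : Fin 3 × P6 =>
      (1 - om ^ ((x.1 : ℕ) : ℤ)) * Q ^ (eZ (Xi ((x.1 : ℕ) : ℤ) x.2)).toNat := by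
    have h := (eqXi.summable_iff (f := fun z => FA3 Q z - FB3 Q z)).2 (hA.sub hB)
    exact h.congr hpoint
  rw [hsum.tsum_prod' (fun j => hsum.prod_factor j)]
  have hinner : ∀ j : Fin 3,
      (∑' p : P6, (1 - om ^ ((j : ℕ) : ℤ)) * Q ^ (eZ (Xi ((j : ℕ) : ℤ) p)).toNat)
        = (1 - om ^ ((j : ℕ) : ℤ)) * Sc Q ((j : ℕ) : ℤ) := by
    intro j; rw [Sc, tsum_mul_left]
  rw [tsum_fintype]
  rw [Fin.sum_univ_three]
  rw [hinner 0, hinner 1, hinner 2]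
  have e0 : (((0 : Fin 3) : ℕ) : ℤ) = 0 := rfl
  have e1 : (((1 : Fin 3) : ℕ) : ℤ) = 1 := rfl
  have e2 : (((2 : Fin 3) : ℕ) : ℤ) = 2 := rfl
  rw [e0, e1, e2, Sc_two_eq_one]
  rw [zpow_zero, zpow_one, show (2 : ℤ) = ((2 : ℕ) : ℤ) from rfl, zpow_natCast]
  linear_combination (-(Sc Q 1)) * om_sum

lemma c_side (h1 : ‖Q‖ < 1) (hQ : Q ≠ 0) : thetaC Q ^ 3 = 3 * Sc Q 1 := by
  rw [tsum_FC3 h1 hQ]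
  have hC := summable_FC3 h1 hQ
  have step1 : ∑' w : P6, FC3 Q w = ∑' x : Fin 3 × P6, FC3 Q (eqTh x) :=
    (eqTh.tsum_eq (FC3 Q)).symm
  have hpoint : ∀ x : Fin 3 × P6, FC3 Q (eqTh x) = Q ^ (eZ (Xi 1 x.2)).toNat := by
    rintro ⟨j, p⟩
    show FC3 Q (Th (j : ℕ) p) = _
    rw [FC3, fW_Th]
  have hsum : Summable fun x : Fin 3 × P6 => Q ^ (eZ (Xi 1 x.2)).toNat := by
    have h := (eqTh.summable_iff (f := FC3 Q)).2 hC
    exact h.congr hpoint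
  rw [step1, tsum_congr hpoint, hsum.tsum_prod' (fun j => hsum.prod_factor j)]
  rw [tsum_fintype, Fin.sum_univ_three]
  rw [show (∑' p : P6, Q ^ (eZ (Xi 1 p)).toNat) = Sc Q 1 from rfl]
  ring

lemma key_identity (h1 : ‖Q‖ < 1) (hQ : Q ≠ 0) :
    thetaA Q ^ 3 = thetaB Q ^ 3 + thetaC Q ^ 3 := by
  have h := ab_side h1 hQ
  have h2 := c_side h1 hQ
  linear_combination h - h2

end QFixed

/-! ### the case `Q = 0` -/

lemma E2_pos (p : P2) (hp : p ≠ (0, 0)) : 0 < E2 p := by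
  have hne : p.1 ≠ 0 ∨ p.2 ≠ 0 := by
    by_contra h
    push_neg at h
    exact hp (Prod.ext h.1 h.2)
  have h2 : 2 * E2 p = (p.1 + p.2) ^ 2 + p.1 ^ 2 + p.2 ^ 2 := by unfold E2; ring
  rcases hne with h | h
  · have : 1 ≤ |p.1| := Int.one_le_abs (by omega)
    have h1 : 1 ≤ p.1 ^ 2 := by nlinarith [_root_.sq_abs p.1]
    nlinarith [sq_nonneg (p.1 + p.2), sq_nonneg p.2]
  · have : 1 ≤ |p.2| := Int.one_le_abs (by omega)
    have h1 : 1 ≤ p.2 ^ 2 := by nlinarith [_root_.sq_abs p.2]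
    nlinarith [sq_nonneg (p.1 + p.2), sq_nonneg p.1]

lemma thetaA_zero : thetaA 0 = 1 := by
  rw [thetaA_eq]
  rw [tsum_eq_single ((0, 0) : P2)]
  · rw [fA]; norm_num [E2]
  · intro p hp
    rw [fA, zero_pow]
    have := E2_pos p hp
    omega

lemma thetaB_zero : thetaB 0 = 1 := by
  rw [thetaB_eq]
  rw [tsum_eq_single ((0, 0) : P2)]
  · rw [fB]; norm_num [E2]
  · intro p hp
    rw [fB, zero_pow, mul_zero]
    have := E2_pos p hp
    omega

lemma thetaC_zero : thetaC 0 = 0 := by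
  rw [thetaC_eq]
  have h : ∀ p : P2, fC 0 p = 0 := by
    intro p
    rw [fC, cexp_eq]
    apply Complex.zero_cpow
    intro h
    have h3 : ((3 * G2 p + 1 : ℤ) : ℂ) = 0 := by push_cast; linear_combination 3 * h
    have h4 : (3 * G2 p + 1 : ℤ) = 0 := by exact_mod_cast h3
    omega
  simp only [h]
  exact tsum_zero

end BorweinAux

/-- Borwein's cubic identity: `a(Q)³ = b(Q)³ + c(Q)³` for
`|Q| < 1`; equivalently (when `a(Q) ≠ 0`) `1 - b³/a³ = c³/a³`. -/
theorem borwein_cubic_identity :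
    ∀ Q : ℂ, ‖Q‖ < 1 →
      thetaA Q ^ 3 = thetaB Q ^ 3 + thetaC Q ^ 3 ∧
      (thetaA Q ≠ 0 →
        1 - thetaB Q ^ 3 / thetaA Q ^ 3 = thetaC Q ^ 3 / thetaA Q ^ 3) := by
  intro Q h1
  by_cases hQ : Q = 0
  · subst hQ
    rw [BorweinAux.thetaA_zero, BorweinAux.thetaB_zero, BorweinAux.thetaC_zero]
    constructor
    · norm_num
    · intro _; norm_num
  · have key := BorweinAux.key_identity h1 hQ
    refine ⟨key, fun ha => ?_⟩
    have ha3 : thetaA Q ^ 3 ≠ 0 := pow_ne_zero 3 ha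
    field_simp
    linear_combination key
end
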